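/- Let X be a compact Hausdorff space, A a closed linear sublattice of C(X), and f ∈ C(X). If for every pair of points x, y ∈ X there exists g ∈ A with g(x) = f(x) and g(y) = f(y), then f ∈ A. -/

import Mathlib

open scoped Topology

theorem stmt_4 (X : Type*) [TopologicalSpace X] [CompactSpace X] [T2Space X]
    (A : Submodule ℝ C(X, ℝ)) (hclosed : IsClosed (A : Set C(X, ℝ)))
    (hsup : ∀ f g : C(X, ℝ), f ∈ A → g ∈ A → f ⊔ g ∈ A)
    (hinf : ∀ f g : C(X, ℝ), f ∈ A → g ∈ A → f ⊓ g ∈ A)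
    (f : C(X, ℝ))
    (h : ∀ x y : X, ∃ g ∈ A, g x = f x ∧ g y = f y) :
    f ∈ A := by
  set L : Set C(X, ℝ) := (A : Set C(X, ℝ)) with hL
  have inf_mem : ∀ᵉ (f ∈ L) (g ∈ L), f ⊓ g ∈ L := fun a ha b hb => hinf a b ha hb
  have sup_mem : ∀ᵉ (f ∈ L) (g ∈ L), f ⊔ g ∈ L := fun a ha b hb => hsup a b ha hb
  have key : f ∈ closure L := by
    refine Filter.Frequently.mem_closure
      ((Filter.HasBasis.frequently_iff Metric.nhds_basis_ball).mpr fun ε pos => ?_)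
    simp only [exists_prop, Metric.mem_ball]
    by_cases nX : Nonempty X
    swap
    · exact ⟨0, (ContinuousMap.dist_lt_iff pos).mpr fun x => absurd ⟨x⟩ nX, A.zero_mem⟩
    choose g hg w₁ w₂ using fun x y => h x y
    let U : X → X → Set X := fun x y => {z | f z - ε < g x y z}
    have U_nhd_y : ∀ x y, U x y ∈ 𝓝 y := by
      intro x y
      refine IsOpen.mem_nhds ?_ ?_
      · apply isOpen_lt <;> continuity
      · rw [Set.mem_setOf_eq, w₂]
        exact sub_lt_self _ pos
    let ys : X → Finset X := fun x => (CompactSpace.elim_nhds_subcover (U x) (U_nhd_y x)).choose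
    let ys_w : ∀ x, ⋃ y ∈ ys x, U x y = ⊤ := fun x =>
      (CompactSpace.elim_nhds_subcover (U x) (U_nhd_y x)).choose_spec
    have ys_nonempty : ∀ x, (ys x).Nonempty := fun x =>
      Set.nonempty_of_union_eq_top_of_nonempty _ _ nX (ys_w x)
    let hh : X → L := fun x =>
      ⟨(ys x).sup' (ys_nonempty x) fun y => (g x y : C(X, ℝ)),
        Finset.sup'_mem _ sup_mem _ _ _ fun y _ => hg x y⟩
    have lt_h : ∀ x z, f z - ε < (hh x : X → ℝ) z := by
      intro x z
      obtain ⟨y, ym, zm⟩ := Set.exists_set_mem_of_union_eq_top _ _ (ys_w x) z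
      dsimp [hh]
      simp only [Subtype.coe_mk, ContinuousMap.coe_sup', Finset.sup'_apply, Finset.lt_sup'_iff]
      exact ⟨y, ym, zm⟩
    have h_eq : ∀ x, (hh x : X → ℝ) x = f x := by intro x; simp [hh, w₁]
    let W : X → Set X := fun x => {z | (hh x : X → ℝ) z < f z + ε}
    have W_nhd : ∀ x, W x ∈ 𝓝 x := by
      intro x
      refine IsOpen.mem_nhds ?_ ?_
      · apply isOpen_lt <;> fun_prop
      · dsimp only [W, Set.mem_setOf_eq]
        rw [Set.mem_setOf_eq, h_eq]
        exact lt_add_of_pos_right _ pos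
    let xs : Finset X := (CompactSpace.elim_nhds_subcover W W_nhd).choose
    let xs_w : ⋃ x ∈ xs, W x = ⊤ := (CompactSpace.elim_nhds_subcover W W_nhd).choose_spec
    have xs_nonempty : xs.Nonempty := Set.nonempty_of_union_eq_top_of_nonempty _ _ nX xs_w
    let k : (L : Type _) :=
      ⟨xs.inf' xs_nonempty fun x => (hh x : C(X, ℝ)),
        Finset.inf'_mem _ inf_mem _ _ _ fun x _ => (hh x).2⟩
    refine ⟨k.1, ?_, k.2⟩
    rw [ContinuousMap.dist_lt_iff pos]
    intro z
    rw [show ∀ a b ε : ℝ, dist a b < ε ↔ a < b + ε ∧ b - ε < a by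
          intros; simp only [← Metric.mem_ball, Real.ball_eq_Ioo, Set.mem_Ioo, and_comm]]
    fconstructor
    · dsimp [k]
      simp only [Finset.inf'_lt_iff, ContinuousMap.inf'_apply]
      exact Set.exists_set_mem_of_union_eq_top _ _ xs_w z
    · dsimp [k]
      simp only [Finset.lt_inf'_iff, ContinuousMap.inf'_apply]
      rintro x -
      apply lt_h
  rwa [hclosed.closure_eq] at key
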